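/- Let s ≥ 3 and s+2 ≤ t ≤ 2s-1 be integers and suppose (s,t) is exceptional. Then v(Q_2) = 0 and v(Q_1) ≤ 0, i.e. t + (δ + s(α-1)) + (δ + (t-s+1)(α-1)) + (C(t,2) - C(s,2) - C(t-s+1,2))(δ + 2(α-1)) - (δ + 2α) = 0 and t + (δ + s(α-1)) + (C(t,2) - C(s,2))(δ + 2(α-1)) - (δ + 2α) ≤ 0, where C(a,2) = a(a-1)/2. -/

import Mathlib

/-- The pair `(s,t)` is regular if `s ≥ 11` and `s+3 ≤ t ≤ 2s-4`, or if
`(s,t) ∈ {(10,14),(10,15)}`. -/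
def IsRegularPair (s t : ℕ) : Prop :=
  (11 ≤ s ∧ s + 3 ≤ t ∧ t ≤ 2 * s - 4) ∨ (s = 10 ∧ t = 14) ∨ (s = 10 ∧ t = 15)

open Classical in
/-- The exponent `α = α_{s,t}`. -/
noncomputable def ERalpha (s t : ℕ) : ℝ :=
  if IsRegularPair s t then
    (((s : ℝ) - 2) * ((t : ℝ) - (s : ℝ)) * ((t : ℝ) + (s : ℝ) - 1) + 2 * (t : ℝ) - 2 * (s : ℝ)) /
      ((2 * (s : ℝ) - 3) * ((t : ℝ) - (s : ℝ)) * ((t : ℝ) + (s : ℝ) - 1) - 2 * (s : ℝ) + 4)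
  else
    (((s : ℝ) - 2) * ((t : ℝ) - (s : ℝ)) * ((s : ℝ) - 1) + (s : ℝ) - 1) /
      ((2 * (s : ℝ) - 3) * ((t : ℝ) - (s : ℝ)) * ((s : ℝ) - 1) + 2 * (s : ℝ) - (t : ℝ))

/-- `δ = s - (2s-1)α`. -/
noncomputable def ERdelta (s t : ℕ) : ℝ := (s : ℝ) - (2 * (s : ℝ) - 1) * ERalpha s t

/-- `η = 2(1-α) - δ`. -/
noncomputable def EReta (s t : ℕ) : ℝ := 2 * (1 - ERalpha s t) - ERdelta s t

set_option maxHeartbeats 2000000 in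
/-- **Lemma (extremal, exceptional case).** If `(s,t)` is exceptional, then `v(Q_2) = 0`
and `v(Q_1) ≤ 0`. -/
theorem extremal_scheme_exceptional (s t : ℕ) (hs : 3 ≤ s) (ht1 : s + 2 ≤ t)
    (ht2 : t ≤ 2 * s - 1) (hexc : ¬ IsRegularPair s t) :
    (t : ℝ) + (ERdelta s t + (s : ℝ) * (ERalpha s t - 1)) +
        (ERdelta s t + ((t : ℝ) - (s : ℝ) + 1) * (ERalpha s t - 1)) +
        ((t : ℝ) * ((t : ℝ) - 1) / 2 - (s : ℝ) * ((s : ℝ) - 1) / 2 -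
            ((t : ℝ) - (s : ℝ) + 1) * ((t : ℝ) - (s : ℝ)) / 2) *
          (ERdelta s t + 2 * (ERalpha s t - 1)) -
        (ERdelta s t + 2 * ERalpha s t) = 0 ∧
    (t : ℝ) + (ERdelta s t + (s : ℝ) * (ERalpha s t - 1)) +
        ((t : ℝ) * ((t : ℝ) - 1) / 2 - (s : ℝ) * ((s : ℝ) - 1) / 2) *
          (ERdelta s t + 2 * (ERalpha s t - 1)) -
        (ERdelta s t + 2 * ERalpha s t) ≤ 0 := by
  have hα : ERalpha s t =
      (((s : ℝ) - 2) * ((t : ℝ) - (s : ℝ)) * ((s : ℝ) - 1) + (s : ℝ) - 1) /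
        ((2 * (s : ℝ) - 3) * ((t : ℝ) - (s : ℝ)) * ((s : ℝ) - 1) + 2 * (s : ℝ) - (t : ℝ)) := by
    rw [ERalpha, if_neg hexc]
  have hs' : (3:ℝ) ≤ (s:ℝ) := by exact_mod_cast hs
  have ht1' : (s:ℝ) + 2 ≤ (t:ℝ) := by exact_mod_cast ht1
  have ht2' : (t:ℝ) + 1 ≤ 2 * (s:ℝ) := by
    have h : t + 1 ≤ 2 * s := by omega
    exact_mod_cast h
  have hden : 0 < (2 * (s : ℝ) - 3) * ((t : ℝ) - (s : ℝ)) * ((s : ℝ) - 1) + 2 * (s : ℝ) - (t : ℝ) := by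
    have hprod : 0 < (2 * (s : ℝ) - 3) * ((t : ℝ) - (s : ℝ)) * ((s : ℝ) - 1) :=
      mul_pos (mul_pos (by linarith) (by linarith)) (by linarith)
    linarith
  have hden' := hden.ne'
  constructor
  · rw [ERdelta, hα]
    field_simp [show ((t:ℝ) - s) * (s - 1) * (s * 2 - 3) + s * 2 - t ≠ 0 by convert hden' using 1; ring]
    ring
  · -- v(Q1) ≤ 0
    set S := (s:ℝ) with hS
    set T := (t:ℝ) with hT
    have hP : 2 - 5/2*T - 1/2*T^2 + T^3 - 1/2*S + 11/2*S*T - 4*S*T^2 - 1/2*S*T^3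
        - 4*S^2 + 7/2*S^2*T + 2*S^2*T^2 - 1/2*S^3 - 5/2*S^3*T + S^4 ≤ 0 := by
      have hnr : ¬ (11 ≤ s ∧ s + 3 ≤ t ∧ t ≤ 2 * s - 4) := fun h => hexc (Or.inl h)
      have h14 : ¬ (s = 10 ∧ t = 14) := fun h => hexc (Or.inr (Or.inl h))
      have h15 : ¬ (s = 10 ∧ t = 15) := fun h => hexc (Or.inr (Or.inr h))
      have hcase : t = s + 2 ∨ t + 3 = 2 * s ∨ t + 2 = 2 * s ∨ t + 1 = 2 * s ∨
          (s ≤ 10 ∧ ¬(s = 10 ∧ t = 14) ∧ ¬(s = 10 ∧ t = 15)) := by omega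
      rcases hcase with h | h | h | h | ⟨hs10, h14', h15'⟩
      · have hTe : T = S + 2 := by rw [hS, hT, h]; push_cast; ring
        rw [hTe]; nlinarith
      · have hTe : T = 2*S - 3 := by
          have := congrArg (fun n : ℕ => (n:ℝ)) h
          push_cast at this; rw [hS, hT]; linarith
        have hs5 : (5:ℝ) ≤ S := by
          have : 5 ≤ s := by omega
          rw [hS]; exact_mod_cast this
        rw [hTe]; nlinarith [sq_nonneg (S - 5), sq_nonneg (S - 4)]
      · have hTe : T = 2*S - 2 := by
          have := congrArg (fun n : ℕ => (n:ℝ)) h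
          push_cast at this; rw [hS, hT]; linarith
        have hs4' : (4:ℝ) ≤ S := by
          have : 4 ≤ s := by omega
          rw [hS]; exact_mod_cast this
        rw [hTe]
        nlinarith [mul_nonneg (mul_nonneg (by linarith : (0:ℝ) ≤ S - 4) (by linarith : (0:ℝ) ≤ S - 4)) (by linarith : (0:ℝ) ≤ S - 4), sq_nonneg (S - 4)]
      · have hTe : T = 2*S - 1 := by
          have := congrArg (fun n : ℕ => (n:ℝ)) h
          push_cast at this; rw [hS, hT]; linarith
        rw [hTe]
        nlinarith [mul_nonneg (mul_nonneg (by linarith : (0:ℝ) ≤ S - 3) (by linarith : (0:ℝ) ≤ S - 3)) (by linarith : (0:ℝ) ≤ S - 3), sq_nonneg (S - 3)]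
      · rw [hS, hT]
        have ht2n : t ≤ 2 * s - 1 := ht2
        interval_cases s <;> interval_cases t <;> first | (exfalso; omega) | norm_num
    have heq : (T + (ERdelta s t + S * (ERalpha s t - 1)) +
        (T * (T - 1) / 2 - S * (S - 1) / 2) * (ERdelta s t + 2 * (ERalpha s t - 1)) -
        (ERdelta s t + 2 * ERalpha s t)) *
        ((2 * S - 3) * (T - S) * (S - 1) + 2 * S - T) =
        2 - 5/2*T - 1/2*T^2 + T^3 - 1/2*S + 11/2*S*T - 4*S*T^2 - 1/2*S*T^3
        - 4*S^2 + 7/2*S^2*T + 2*S^2*T^2 - 1/2*S^3 - 5/2*S^3*T + S^4 := by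
      rw [ERdelta, hα, ← hS]
      field_simp [show (T - S) * (S - 1) * (S * 2 - 3) + S * 2 - T ≠ 0 by convert hden' using 1; ring]
      ring
    by_contra hcon
    push_neg at hcon
    nlinarith [mul_pos hcon hden]
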